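/- Let X be an abelian group with pX = 0 (a vector space over F_p), let Z[X] be the free abelian group on symbols [x], x ∈ X, modulo [0] = 0, with augmentation η([x]) = x, and R(X) = ker η. For x,y ∈ X write ⟨x,y⟩ = [x] + [y] − [x+y] ∈ R(X). Then the map i : X → R(X)/p²R(X) given by i(x) = Σ_{j=0}^{p−1} p·⟨jx, x⟩ (mod p²R(X)) is a well-defined group homomorphism, and the sequence 0 → X →^i R(X)/p²R(X) →^σ Z/p²Z[X] →^η X → 0 is exact, where σ is induced by the inclusion R(X) ⊆ Z[X]. -/

import Mathlib

/-! STATEMENT 15: For an `F_p`-vector space `X` (an abelian group with `p • x = 0`), with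
`Z[X]` the free abelian group on symbols `[x]` modulo `[0] = 0` (modelled by `X →₀ ℤ`;
the relation `[0] = 0` is harmless here, see below), `η([x]) = x`, `R(X) = ker η`, and
`⟨x,y⟩ = [x] + [y] − [x+y]`, the map `i(x) = Σ_{j<p} p·⟨jx,x⟩ mod p²R(X)` is a
well-defined group homomorphism and
`0 → X →^i R(X)/p²R(X) →^σ Z/p²Z[X] →^η X → 0` is exact. -/

/-- `η : Z[X] → X`, `Σ n_x [x] ↦ Σ n_x x`. -/
noncomputable def eta (X : Type*) [AddCommGroup X] : (X →₀ ℤ) →ₗ[ℤ] X :=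
  Finsupp.linearCombination ℤ (id : X → X)

/-- `⟨a,b⟩ = [a] + [b] − [a+b] ∈ R(X)`. -/
noncomputable def br {X : Type*} [AddCommGroup X] (a b : X) : X →₀ ℤ :=
  Finsupp.single a 1 + Finsupp.single b 1 - Finsupp.single (a + b) 1

/-- `R(X) = ker η`. -/
noncomputable def RX (X : Type*) [AddCommGroup X] : Submodule ℤ (X →₀ ℤ) :=
  LinearMap.ker (eta X)

lemma eta_br {X : Type*} [AddCommGroup X] (a b : X) : eta X (br a b) = 0 := by
  simp [eta, br]

/-- The submodule `p²·N` of `N`. -/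
noncomputable def p2sub (N : Type*) [AddCommGroup N] [Module ℤ N] (p : ℕ) : Submodule ℤ N :=
  LinearMap.range (((p : ℤ) ^ 2) • (LinearMap.id : N →ₗ[ℤ] N))

/-- `R(X)/p²R(X)`. -/
noncomputable abbrev QR (X : Type*) [AddCommGroup X] (p : ℕ) :=
  RX X ⧸ p2sub (RX X) p

/-- `Z/p²Z[X] = Z[X]/p²Z[X]`. -/
noncomputable abbrev QZ (X : Type*) [AddCommGroup X] (p : ℕ) :=
  (X →₀ ℤ) ⧸ p2sub (X →₀ ℤ) p

/-- `σ : R(X)/p²R(X) → Z/p²Z[X]` induced by the inclusion `R(X) ⊆ Z[X]`. -/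
noncomputable def sigmaMap (X : Type*) [AddCommGroup X] (p : ℕ) :
    QR X p →ₗ[ℤ] QZ X p :=
  Submodule.mapQ _ _ (RX X).subtype (by
    rintro x ⟨y, rfl⟩
    exact ⟨(RX X).subtype y, by
      simp only [LinearMap.smul_apply, LinearMap.id_coe, id_eq, map_smul]⟩)

/-- `η̄ : Z/p²Z[X] → X` induced by `η` (well defined since `pX = 0`). -/
noncomputable def etaBar (X : Type*) [AddCommGroup X] (p : ℕ) (hX : ∀ x : X, p • x = 0) :
    QZ X p →ₗ[ℤ] X :=
  Submodule.liftQ _ (eta X) (by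
    rintro x ⟨y, rfl⟩
    simp only [LinearMap.mem_ker, LinearMap.smul_apply, LinearMap.id_coe, id_eq, map_smul]
    have h : (p : ℤ) • eta X y = 0 := by
      rw [natCast_zsmul]; exact hX _
    rw [pow_two, mul_smul, h, smul_zero])

/-- `i : X → R(X)/p²R(X)`, `i(x) = Σ_{j=0}^{p−1} p·⟨jx, x⟩  (mod p²R(X))`. -/
noncomputable def iMap (X : Type*) [AddCommGroup X] (p : ℕ) : X → QR X p := fun x =>
  Submodule.Quotient.mk
    ⟨∑ j ∈ Finset.range p, (p : ℤ) • br (j • x) x, by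
      simp [RX, LinearMap.mem_ker, map_sum, map_smul, eta_br]⟩

section Aux

variable {X : Type*} [AddCommGroup X] {p : ℕ}

lemma mem_p2sub {N : Type*} [AddCommGroup N] [Module ℤ N] {p : ℕ} {z : N} :
    z ∈ p2sub N p ↔ ∃ y : N, ((p:ℤ)^2) • y = z := by
  simp only [p2sub, LinearMap.mem_range, LinearMap.smul_apply, LinearMap.id_apply]
  exact Iff.rfl

lemma eta_single (x : X) : eta X (Finsupp.single x 1) = x := by
  simp [eta]

lemma sum_br (hX : ∀ x : X, p • x = 0) (x : X) :
    ∑ j ∈ Finset.range p, br (j • x) x = (p : ℤ) • Finsupp.single x 1 := by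
  have h : ∀ j, br (j • x) x
      = Finsupp.single x 1 - (Finsupp.single ((j+1) • x) 1 - Finsupp.single (j • x) 1) := by
    intro j
    rw [br, succ_nsmul]
    abel
  simp_rw [h]
  rw [Finset.sum_sub_distrib, Finset.sum_const, Finset.card_range,
    Finset.sum_range_sub (fun j => Finsupp.single (j • x) 1), hX, zero_smul,
    sub_self, sub_zero, natCast_zsmul]

lemma p2single_mem (hX : ∀ x : X, p • x = 0) (x : X) :
    ((p:ℤ)^2) • Finsupp.single x 1 ∈ RX X := by
  simp only [RX, LinearMap.mem_ker, map_smul, eta_single]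
  rw [pow_two, mul_smul, natCast_zsmul, hX]

lemma iMap_eq (hX : ∀ x : X, p • x = 0) (x : X) :
    iMap X p x = Submodule.Quotient.mk ⟨((p:ℤ)^2) • Finsupp.single x 1, p2single_mem hX x⟩ := by
  unfold iMap
  congr 1
  apply Subtype.ext
  show ∑ j ∈ Finset.range p, (p : ℤ) • br (j • x) x = ((p:ℤ)^2) • Finsupp.single x 1
  rw [← Finset.smul_sum, sum_br hX, smul_smul, ← pow_two]

end Aux

theorem stmt15 {X : Type*} [AddCommGroup X] (p : ℕ) (hp : p.Prime)
    (hX : ∀ x : X, p • x = 0) :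
    -- i is a (well-defined) group homomorphism
    (∀ x y : X, iMap X p (x + y) = iMap X p x + iMap X p y) ∧
    -- exactness at X (left): i is injective
    Function.Injective (iMap X p) ∧
    -- exactness at R(X)/p²R(X): ker σ = im i
    (∀ q : QR X p, sigmaMap X p q = 0 ↔ q ∈ Set.range (iMap X p)) ∧
    -- exactness at Z/p²Z[X]: ker η̄ = im σ
    (∀ z : QZ X p, etaBar X p hX z = 0 ↔ z ∈ Set.range (sigmaMap X p)) ∧
    -- exactness at X (right): η̄ is surjective
    Function.Surjective (etaBar X p hX) := by
  have hp2 : ((p:ℤ)^2) ≠ 0 := by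
    have : (p:ℤ) ≠ 0 := Int.natCast_ne_zero.mpr hp.ne_zero
    positivity
  refine ⟨?_, ?_, ?_, ?_, ?_⟩
  · -- additivity
    intro x y
    rw [iMap_eq hX, iMap_eq hX, iMap_eq hX, ← Submodule.Quotient.mk_add,
      Submodule.Quotient.eq, mem_p2sub]
    refine ⟨-⟨br x y, by simpa [RX] using eta_br x y⟩, Subtype.ext ?_⟩
    show ((p:ℤ)^2) • (-(br x y)) = ((p:ℤ)^2) • Finsupp.single (x+y) 1 -
      (((p:ℤ)^2) • Finsupp.single x 1 + ((p:ℤ)^2) • Finsupp.single y 1)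
    simp only [br, smul_sub, smul_add, smul_neg]
    abel
  · -- injectivity
    intro x y h
    rw [iMap_eq hX, iMap_eq hX, Submodule.Quotient.eq, mem_p2sub] at h
    obtain ⟨r, hr⟩ := h
    have hr' : ((p:ℤ)^2) • (r : X →₀ ℤ)
        = ((p:ℤ)^2) • (Finsupp.single x 1 - Finsupp.single y 1) := by
      have := congrArg Subtype.val hr
      simpa [smul_sub] using this
    have heq := smul_right_injective (X →₀ ℤ) hp2 hr'
    have h0 : eta X ((r : X →₀ ℤ)) = 0 := r.2
    rw [heq, map_sub, eta_single, eta_single, sub_eq_zero] at h0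
    exact h0
  · -- exactness at QR
    intro q
    obtain ⟨r, rfl⟩ := Submodule.Quotient.mk_surjective _ q
    rw [sigmaMap, Submodule.mapQ_apply, Submodule.Quotient.mk_eq_zero, mem_p2sub]
    constructor
    · rintro ⟨ξ, hξ⟩
      refine ⟨eta X ξ, ?_⟩
      rw [iMap_eq hX, Submodule.Quotient.eq, mem_p2sub]
      refine ⟨⟨Finsupp.single (eta X ξ) 1 - ξ, ?_⟩, Subtype.ext ?_⟩
      · simp [RX, eta_single]
      · show ((p:ℤ)^2) • (Finsupp.single (eta X ξ) 1 - ξ)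
          = ((p:ℤ)^2) • Finsupp.single (eta X ξ) 1 - (r : X →₀ ℤ)
        rw [smul_sub, hξ, Submodule.subtype_apply]
    · rintro ⟨x, hx⟩
      rw [iMap_eq hX, Submodule.Quotient.eq, mem_p2sub] at hx
      obtain ⟨s, hs⟩ := hx
      refine ⟨Finsupp.single x 1 - (s : X →₀ ℤ), ?_⟩
      have hc : ((p:ℤ)^2) • (s : X →₀ ℤ)
          = ((p:ℤ)^2) • Finsupp.single x 1 - (r : X →₀ ℤ) := by
        simpa using congrArg Subtype.val hs
      rw [smul_sub, hc, Submodule.subtype_apply]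
      abel
  · -- exactness at QZ
    intro z
    obtain ⟨w, rfl⟩ := Submodule.Quotient.mk_surjective _ z
    rw [etaBar, Submodule.liftQ_apply]
    constructor
    · intro h
      have hw : w ∈ RX X := h
      exact ⟨Submodule.Quotient.mk ⟨w, hw⟩, by rw [sigmaMap, Submodule.mapQ_apply]; rfl⟩
    · rintro ⟨q, hq⟩
      obtain ⟨r, rfl⟩ := Submodule.Quotient.mk_surjective _ q
      rw [sigmaMap, Submodule.mapQ_apply] at hq
      obtain ⟨s, hs⟩ := mem_p2sub.mp ((Submodule.Quotient.eq _).mp hq.symm)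
      have h4 : ((p:ℤ)^2) • eta X s = 0 := by
        rw [pow_two, mul_smul, natCast_zsmul, hX]
      have h3 := congrArg (eta X) hs
      rw [map_smul, h4, map_sub] at h3
      have h5 : eta X ((RX X).subtype r) = 0 := r.2
      rw [h5, sub_zero] at h3
      exact h3.symm
  · -- surjectivity
    intro x
    exact ⟨Submodule.Quotient.mk (Finsupp.single x 1),
      by rw [etaBar, Submodule.liftQ_apply, eta_single]⟩
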